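/- arXiv:2105.11317 — 6 statements merged into one kernel-verified Lean document; each statement's English description precedes it below -/
import Mathlib

section
/- Let G be a finite connected graph, t a positive integer, and let G₀ and G₁ be two orientations of G such that G₁ is obtained from G₀ by reversing the direction of a single arc. Then |γ_{t,1}(G₀) − γ_{t,1}(G₁)| ≤ 1, where γ_{t,1} denotes the directed (t,1) broadcast domination number. -/
open Finset

/-- `DReach A n u v`: there is a directed walk of length `n` from `u` to `v`
in the digraph with arc relation `A`. -/
def DReach {V : Type*} (A : V → V → Prop) : ℕ → V → V → Prop
  | 0, u, v => u = v
  | n + 1, u, v => ∃ w, A u w ∧ DReach A n w v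

/-- The signal a broadcasting vertex `u` of strength `t` sends to `w`:
`t - d(u,w)` where `d` is the directed distance (0 if `d(u,w) ≥ t` or `w` unreachable). -/
noncomputable def dsignal {V : Type*} (A : V → V → Prop) (t : ℕ) (u w : V) : ℕ :=
  sSup {m : ℕ | ∃ n : ℕ, DReach A n u w ∧ m = t - n}

/-- The directed reception at `w` from the broadcast set `S` of strength `t`. -/
noncomputable def dreception {V : Type*} [Fintype V] (A : V → V → Prop) (t : ℕ)
    (S : Finset V) (w : V) : ℕ :=
  ∑ v ∈ S, dsignal A t v w

/-- `S` is a directed `(t,r)` broadcast dominating set of the digraph `A`. -/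
def IsDomSet {V : Type*} [Fintype V] (A : V → V → Prop) (t r : ℕ) (S : Finset V) : Prop :=
  ∀ w : V, r ≤ dreception A t S w

/-- The directed `(t,r)` broadcast domination number of the digraph `A`. -/
noncomputable def gamma {V : Type*} [Fintype V] (A : V → V → Prop) (t r : ℕ) : ℕ :=
  sInf {k : ℕ | ∃ S : Finset V, IsDomSet A t r S ∧ S.card = k}

/-- `A` is an orientation of the simple graph `G`: every arc is along an edge of `G`,
and each edge of `G` is directed in exactly one of the two directions. -/
def IsOrientation {V : Type*} (G : SimpleGraph V) (A : V → V → Prop) : Prop :=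
  (∀ u v, A u v → G.Adj u v) ∧ ∀ u v, G.Adj u v → (A u v ↔ ¬ A v u)

/-- `A₁` is obtained from `A₀` by reversing (flipping) a single arc. -/
def OneFlip {V : Type*} (A₀ A₁ : V → V → Prop) : Prop :=
  ∃ a b, A₀ a b ∧ A₁ b a ∧
    ∀ u v, ¬((u = a ∧ v = b) ∨ (u = b ∧ v = a)) → (A₀ u v ↔ A₁ u v)

/-- The star graph on `n` vertices: vertex with value `0` is the center. -/
def starGraph (n : ℕ) : SimpleGraph (Fin n) where
  Adj u v := u ≠ v ∧ (u.val = 0 ∨ v.val = 0)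
  symm := by constructor; intro u v h; exact ⟨h.1.symm, h.2.symm⟩
  loopless := by constructor; intro u h; exact h.1 rfl


lemma dsignal_bdd {V : Type*} (A : V → V → Prop) (t : ℕ) (u w : V) :
    BddAbove {m : ℕ | ∃ n : ℕ, DReach A n u w ∧ m = t - n} :=
  ⟨t, fun m hm => by obtain ⟨n, _, rfl⟩ := hm; exact Nat.sub_le t n⟩

lemma one_le_dsignal {V : Type*} (A : V → V → Prop) (t : ℕ) (u w : V)
    (h : ∃ n, n < t ∧ DReach A n u w) : 1 ≤ dsignal A t u w := by
  obtain ⟨n, hn, hr⟩ := h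
  have hmem : t - n ∈ {m : ℕ | ∃ n : ℕ, DReach A n u w ∧ m = t - n} := ⟨n, hr, rfl⟩
  have := le_csSup (dsignal_bdd A t u w) hmem
  unfold dsignal
  omega

lemma exists_of_one_le_dsignal {V : Type*} (A : V → V → Prop) (t : ℕ) (u w : V)
    (h : 1 ≤ dsignal A t u w) : ∃ n, n < t ∧ DReach A n u w := by
  by_cases hne : {m : ℕ | ∃ n : ℕ, DReach A n u w ∧ m = t - n}.Nonempty
  · have hmem := Nat.sSup_mem hne (dsignal_bdd A t u w)
    obtain ⟨n, hr, heq⟩ := hmem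
    exact ⟨n, by unfold dsignal at h; omega, hr⟩
  · exfalso
    rw [Set.not_nonempty_iff_eq_empty] at hne
    unfold dsignal at h
    rw [hne, csSup_empty] at h
    simp at h

lemma key {V : Type*} (A₀ A₁ : V → V → Prop) (a b : V)
    (hsub : ∀ u v, A₀ u v → ¬ A₁ u v → u = a ∧ v = b) :
    ∀ n v w, DReach A₀ n v w →
      (∃ m, m ≤ n ∧ DReach A₁ m v w) ∨ (∃ m, m < n ∧ DReach A₁ m b w) := by
  intro n
  induction n with
  | zero => intro v w h; exact Or.inl ⟨0, le_refl 0, h⟩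
  | succ n ih =>
    intro v w h
    obtain ⟨x, hvx, hx⟩ := h
    rcases ih x w hx with ⟨m, hm, hr⟩ | ⟨m, hm, hr⟩
    · by_cases hA : A₁ v x
      · exact Or.inl ⟨m + 1, by omega, x, hA, hr⟩
      · obtain ⟨_, rfl⟩ := hsub v x hvx hA
        exact Or.inr ⟨m, by omega, hr⟩
    · exact Or.inr ⟨m, by omega, hr⟩

lemma dom_univ {V : Type*} [Fintype V] (A : V → V → Prop) (t : ℕ) (ht : 1 ≤ t) :
    IsDomSet A t 1 Finset.univ := by
  intro w
  have h1 : 1 ≤ dsignal A t w w := one_le_dsignal A t w w ⟨0, ht, rfl⟩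
  calc 1 ≤ dsignal A t w w := h1
    _ ≤ dreception A t Finset.univ w := by
      unfold dreception
      exact Finset.single_le_sum (f := fun v => dsignal A t v w)
        (fun i _ => Nat.zero_le _) (Finset.mem_univ w)

lemma gamma_step {V : Type*} [Fintype V] (A₀ A₁ : V → V → Prop) (t : ℕ) (ht : 1 ≤ t)
    (a b : V) (hsub : ∀ u v, A₀ u v → ¬ A₁ u v → u = a ∧ v = b) :
    gamma A₁ t 1 ≤ gamma A₀ t 1 + 1 := by
  classical
  have hne : {k : ℕ | ∃ S : Finset V, IsDomSet A₀ t 1 S ∧ S.card = k}.Nonempty :=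
    ⟨(Finset.univ : Finset V).card, Finset.univ, dom_univ A₀ t ht, rfl⟩
  have hmem := Nat.sInf_mem hne
  obtain ⟨S, hS, hcard⟩ := hmem
  have hdom : IsDomSet A₁ t 1 (insert b S) := by
    intro w
    have h1 := hS w
    have hex : ∃ v ∈ S, 1 ≤ dsignal A₀ t v w := by
      by_contra hc
      push_neg at hc
      have : dreception A₀ t S w = 0 := Finset.sum_eq_zero (fun v hv => by have := hc v hv; omega)
      omega
    obtain ⟨v, hvS, hv⟩ := hex
    obtain ⟨n, hn, hr⟩ := exists_of_one_le_dsignal A₀ t v w hv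
    rcases key A₀ A₁ a b hsub n v w hr with ⟨m, hm, hr'⟩ | ⟨m, hm, hr'⟩
    · calc 1 ≤ dsignal A₁ t v w := one_le_dsignal A₁ t v w ⟨m, by omega, hr'⟩
        _ ≤ dreception A₁ t (insert b S) w := by
          unfold dreception
          exact Finset.single_le_sum (f := fun v => dsignal A₁ t v w)
            (fun i _ => Nat.zero_le _) (Finset.mem_insert_of_mem hvS)
    · calc 1 ≤ dsignal A₁ t b w := one_le_dsignal A₁ t b w ⟨m, by omega, hr'⟩
        _ ≤ dreception A₁ t (insert b S) w := by
          unfold dreception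
          exact Finset.single_le_sum (f := fun v => dsignal A₁ t v w)
            (fun i _ => Nat.zero_le _) (Finset.mem_insert_self b S)
  have hle : gamma A₁ t 1 ≤ (insert b S).card :=
    Nat.sInf_le ⟨insert b S, hdom, rfl⟩
  have := Finset.card_insert_le b S
  have hg : gamma A₀ t 1 = sInf {k : ℕ | ∃ S : Finset V, IsDomSet A₀ t 1 S ∧ S.card = k} := rfl
  omega

theorem stmt0 {V : Type*} [Fintype V] (G : SimpleGraph V) (hconn : G.Connected)
    (t : ℕ) (ht : 1 ≤ t) (A₀ A₁ : V → V → Prop)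
    (h₀ : IsOrientation G A₀) (h₁ : IsOrientation G A₁) (hflip : OneFlip A₀ A₁) :
    |(gamma A₀ t 1 : ℤ) - (gamma A₁ t 1 : ℤ)| ≤ 1 := by
  obtain ⟨a, b, h0ab, h1ba, heq⟩ := hflip
  have hGab : G.Adj a b := h₀.1 a b h0ab
  have hsub01 : ∀ u v, A₀ u v → ¬ A₁ u v → u = a ∧ v = b := by
    intro u v h0 h1
    by_cases hc : (u = a ∧ v = b) ∨ (u = b ∧ v = a)
    · rcases hc with h | ⟨hu, hv⟩
      · exact h
      · exact absurd (hu ▸ hv ▸ h0) ((h₀.2 a b hGab).mp h0ab)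
    · exact absurd ((heq u v hc).mp h0) h1
  have hsub10 : ∀ u v, A₁ u v → ¬ A₀ u v → u = b ∧ v = a := by
    intro u v h1 h0
    by_cases hc : (u = a ∧ v = b) ∨ (u = b ∧ v = a)
    · rcases hc with ⟨hu, hv⟩ | h
      · exact absurd (hu ▸ hv ▸ h1) ((h₁.2 b a hGab.symm).mp h1ba)
      · exact h
    · exact absurd ((heq u v hc).mpr h1) h0
  have h1 := gamma_step A₀ A₁ t ht a b hsub01
  have h2 := gamma_step A₁ A₀ t ht b a hsub10
  rw [abs_le]
  omega
end

section
/- Let G be a finite connected graph, and let G₀ and G₁ be two orientations of G differing by the reversal of a single arc. Then |γ_{2,2}(G₀) − γ_{2,2}(G₁)| ≤ 1, where γ_{2,2} denotes the directed (2,2) broadcast domination number. -/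
open Finset
open scoped Classical

lemma dsignal_eq {V : Type*} (A : V → V → Prop) (u w : V) :
    dsignal A 2 u w = if u = w then 2 else if A u w then 1 else 0 := by
  classical
  unfold dsignal
  have hbdd : BddAbove {m : ℕ | ∃ n : ℕ, DReach A n u w ∧ m = 2 - n} := by
    refine ⟨2, ?_⟩
    rintro m ⟨n, -, rfl⟩
    exact Nat.sub_le _ _
  by_cases huw : u = w
  · subst huw
    rw [if_pos rfl]
    refine le_antisymm ?_ ?_
    · refine csSup_le ⟨2, 0, rfl, rfl⟩ ?_
      rintro m ⟨n, -, rfl⟩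
      exact Nat.sub_le _ _
    · exact le_csSup hbdd ⟨0, rfl, rfl⟩
  · rw [if_neg huw]
    by_cases hA : A u w
    · rw [if_pos hA]
      refine le_antisymm ?_ ?_
      · refine csSup_le ⟨1, 1, ⟨w, hA, rfl⟩, rfl⟩ ?_
        rintro m ⟨n, hr, rfl⟩
        match n with
        | 0 => exact absurd hr huw
        | n + 1 => omega
      · exact le_csSup hbdd ⟨1, ⟨w, hA, rfl⟩, rfl⟩
    · rw [if_neg hA]
      rcases Set.eq_empty_or_nonempty {m : ℕ | ∃ n : ℕ, DReach A n u w ∧ m = 2 - n} with he | hne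
      · rw [he, csSup_empty]; rfl
      · refine Nat.le_antisymm (csSup_le hne ?_) (Nat.zero_le _)
        rintro m ⟨n, hr, rfl⟩
        match n with
        | 0 => exact absurd hr huw
        | 1 => obtain ⟨x, hx, rfl⟩ := hr; exact absurd hx hA
        | n + 2 => omega

lemma domset_univ {V : Type*} [Fintype V] (A : V → V → Prop) :
    IsDomSet A 2 2 (univ : Finset V) := by
  intro w
  unfold dreception
  have h : dsignal A 2 w w ≤ ∑ v ∈ univ, dsignal A 2 v w :=
    Finset.single_le_sum (f := fun v => dsignal A 2 v w) (fun i _ => Nat.zero_le _) (mem_univ w)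
  rwa [dsignal_eq, if_pos rfl] at h

lemma gamma_key {V : Type*} [Fintype V] (G : SimpleGraph V) (A₀ A₁ : V → V → Prop)
    (h₀ : IsOrientation G A₀) (hflip : OneFlip A₀ A₁) :
    gamma A₁ 2 2 ≤ gamma A₀ 2 2 + 1 := by
  classical
  obtain ⟨a, b, hab, hba, hpres⟩ := hflip
  have hnba : ¬ A₀ b a := (h₀.2 a b (h₀.1 a b hab)).1 hab
  have hne : {k : ℕ | ∃ S : Finset V, IsDomSet A₀ 2 2 S ∧ S.card = k}.Nonempty :=
    ⟨(univ : Finset V).card, univ, domset_univ A₀, rfl⟩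
  obtain ⟨S, hS, hcard⟩ := Nat.sInf_mem hne
  have hdom : IsDomSet A₁ 2 2 (insert b S) := by
    intro w
    by_cases hw : w ∈ insert b S
    · show 2 ≤ ∑ v ∈ insert b S, dsignal A₁ 2 v w
      have h : dsignal A₁ 2 w w ≤ ∑ v ∈ insert b S, dsignal A₁ 2 v w :=
        Finset.single_le_sum (f := fun v => dsignal A₁ 2 v w) (fun i _ => Nat.zero_le _) hw
      rwa [dsignal_eq, if_pos rfl] at h
    · have hwb : w ≠ b := fun h => hw (h ▸ mem_insert_self b S)
      have hwS : w ∉ S := fun h => hw (mem_insert_of_mem h)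
      have h2 : 2 ≤ dreception A₀ 2 S w := hS w
      have hle : dreception A₀ 2 S w ≤ dreception A₁ 2 S w := by
        refine Finset.sum_le_sum fun v hv => ?_
        have hvw : v ≠ w := fun h => hwS (h ▸ hv)
        rw [dsignal_eq, dsignal_eq, if_neg hvw, if_neg hvw]
        by_cases h01 : A₀ v w
        · have h11 : A₁ v w := by
            refine (hpres v w ?_).1 h01
            rintro (⟨rfl, rfl⟩ | ⟨rfl, rfl⟩)
            · exact hwb rfl
            · exact hnba h01
          simp [h01, h11]
        · simp [h01]
      have hmono : dreception A₁ 2 S w ≤ dreception A₁ 2 (insert b S) w :=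
        Finset.sum_le_sum_of_subset (subset_insert _ _)
      unfold dreception at *
      omega
  calc gamma A₁ 2 2 ≤ (insert b S).card := Nat.sInf_le ⟨_, hdom, rfl⟩
    _ ≤ S.card + 1 := card_insert_le _ _
    _ = gamma A₀ 2 2 + 1 := by rw [hcard]; rfl

theorem stmt2 {V : Type*} [Fintype V] (G : SimpleGraph V) (hconn : G.Connected)
    (A₀ A₁ : V → V → Prop)
    (h₀ : IsOrientation G A₀) (h₁ : IsOrientation G A₁) (hflip : OneFlip A₀ A₁) :
    |(gamma A₀ 2 2 : ℤ) - (gamma A₁ 2 2 : ℤ)| ≤ 1 := by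
  have hflip' : OneFlip A₁ A₀ := by
    obtain ⟨a, b, hab, hba, hpres⟩ := hflip
    refine ⟨b, a, hba, hab, fun u v h => (hpres u v ?_).symm⟩
    tauto
  have h1 := gamma_key G A₀ A₁ h₀ hflip
  have h2 := gamma_key G A₁ A₀ h₁ hflip'
  rw [abs_le]
  omega
end

section
/- Let S_n be the star graph on n ≥ 3 vertices. The set of values γ_{2,2}(Ḡ) over all orientations Ḡ of S_n is exactly {n−1, n}. That is, every orientation has directed (2,2) broadcast domination number n−1 or n, and both values are achieved. -/
open Finset

section Aux

variable {V : Type*}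

lemma sig_bdd (A : V → V → Prop) (t : ℕ) (u w : V) :
    BddAbove {m : ℕ | ∃ n : ℕ, DReach A n u w ∧ m = t - n} :=
  ⟨t, fun m ⟨n, _, hm⟩ => hm ▸ Nat.sub_le t n⟩

lemma sig_self (A : V → V → Prop) (u : V) : dsignal A 2 u u = 2 := by
  apply le_antisymm
  · exact csSup_le' (fun m ⟨n, _, hm⟩ => hm ▸ Nat.sub_le 2 n)
  · exact le_csSup (sig_bdd A 2 u u) ⟨0, by simp [DReach], rfl⟩

lemma sig_le_one {A : V → V → Prop} {u w : V} (h : u ≠ w) : dsignal A 2 u w ≤ 1 := by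
  apply csSup_le'
  rintro m ⟨k, hr, hm⟩
  cases k with
  | zero => simp [DReach] at hr; exact absurd hr h
  | succ k => omega

lemma sig_eq_zero {A : V → V → Prop} {u w : V} (h0 : u ≠ w) (h1 : ¬ A u w) :
    dsignal A 2 u w = 0 := by
  refine Nat.le_zero.mp (csSup_le' ?_)
  rintro m ⟨k, hr, hm⟩
  match k with
  | 0 => simp [DReach] at hr; exact absurd hr h0
  | 1 =>
    simp only [DReach] at hr
    obtain ⟨x, hx, hxw⟩ := hr
    exact absurd (hxw ▸ hx) h1
  | (k+2) => omega

lemma one_le_sig {A : V → V → Prop} {u w : V} (h : A u w) : 1 ≤ dsignal A 2 u w :=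
  le_csSup (sig_bdd A 2 u w) ⟨1, ⟨w, h, rfl⟩, rfl⟩

lemma two_le_rec_of_mem [Fintype V] {A : V → V → Prop} {S : Finset V} {w : V}
    (hw : w ∈ S) : 2 ≤ dreception A 2 S w := by
  calc 2 = dsignal A 2 w w := (sig_self A w).symm
    _ ≤ ∑ v ∈ S, dsignal A 2 v w :=
        Finset.single_le_sum (f := fun v => dsignal A 2 v w) (fun i _ => Nat.zero_le _) hw

lemma univ_dom [Fintype V] (A : V → V → Prop) : IsDomSet A 2 2 Finset.univ :=
  fun w => two_le_rec_of_mem (Finset.mem_univ w)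

end Aux

section Star

variable {n : ℕ}

lemma leaf_mem (hn : 3 ≤ n) {A : Fin n → Fin n → Prop}
    (hA : IsOrientation (starGraph n) A) {S : Finset (Fin n)}
    (hS : IsDomSet A 2 2 S) (w : Fin n) (hw : w.val ≠ 0) : w ∈ S := by
  by_contra hws
  have hrec := hS w
  have hle : dreception A 2 S w ≤ 1 := by
    calc dreception A 2 S w ≤ ∑ v ∈ S, (if v.val = 0 then 1 else 0) := by
          apply Finset.sum_le_sum
          intro v hv
          have hvw : v ≠ w := fun h => hws (h ▸ hv)
          by_cases hv0 : v.val = 0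
          · simpa [hv0] using sig_le_one hvw
          · simp only [hv0, if_false]
            rw [sig_eq_zero hvw]
            intro hAvw
            rcases (hA.1 v w hAvw).2 with h | h
            · exact hv0 h
            · exact hw h
      _ = ∑ v ∈ S.filter (fun v => v.val = 0), 1 := (Finset.sum_filter _ _).symm
      _ = (S.filter (fun v => v.val = 0)).card := by rw [Finset.card_eq_sum_ones]
      _ ≤ ({⟨0, by omega⟩} : Finset (Fin n)).card := by
          apply Finset.card_le_card
          intro v hv
          simp only [Finset.mem_filter] at hv
          simp [Fin.ext_iff, hv.2]
      _ = 1 := Finset.card_singleton _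
  omega

lemma card_ge (hn : 3 ≤ n) {A : Fin n → Fin n → Prop}
    (hA : IsOrientation (starGraph n) A) {S : Finset (Fin n)}
    (hS : IsDomSet A 2 2 S) : n - 1 ≤ S.card := by
  have hsub : (({⟨0, by omega⟩} : Finset (Fin n))ᶜ) ⊆ S := by
    intro w hw
    apply leaf_mem hn hA hS
    intro h0
    simp only [Finset.mem_compl, Finset.mem_singleton] at hw
    exact hw (Fin.ext h0)
  have := Finset.card_le_card hsub
  rwa [Finset.card_compl, Finset.card_singleton, Fintype.card_fin] at this

lemma gamma_le_n {A : Fin n → Fin n → Prop} : gamma A 2 2 ≤ n :=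
  Nat.sInf_le ⟨Finset.univ, univ_dom A, by simp⟩

def Ain (n : ℕ) : Fin n → Fin n → Prop := fun u v => v.val = 0 ∧ u.val ≠ 0

def Aout (n : ℕ) : Fin n → Fin n → Prop := fun u v => u.val = 0 ∧ v.val ≠ 0

lemma orient_in : IsOrientation (starGraph n) (Ain n) := by
  constructor
  · rintro u v ⟨h1, h2⟩
    exact ⟨fun h => h2 (h ▸ h1), Or.inr h1⟩
  · rintro u v ⟨hne, hor⟩
    have h3 : u.val ≠ v.val := fun h => hne (Fin.ext h)
    simp only [Ain, ne_eq, not_and, not_not]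
    omega

lemma orient_out : IsOrientation (starGraph n) (Aout n) := by
  constructor
  · rintro u v ⟨h1, h2⟩
    exact ⟨fun h => h2 (h ▸ h1), Or.inl h1⟩
  · rintro u v ⟨hne, hor⟩
    have h3 : u.val ≠ v.val := fun h => hne (Fin.ext h)
    simp only [Aout, ne_eq, not_and, not_not]
    omega

lemma gamma_in (hn : 3 ≤ n) : gamma (Ain n) 2 2 = n - 1 := by
  set c : Fin n := ⟨0, by omega⟩ with hc
  set S0 : Finset (Fin n) := ({c} : Finset (Fin n))ᶜ with hS0
  have hcard : S0.card = n - 1 := by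
    rw [hS0, Finset.card_compl, Finset.card_singleton, Fintype.card_fin]
  have hdom : IsDomSet (Ain n) 2 2 S0 := by
    intro w
    by_cases hwc : w = c
    · subst hwc
      set v1 : Fin n := ⟨1, by omega⟩ with hv1
      set v2 : Fin n := ⟨2, by omega⟩ with hv2
      have h12 : v1 ≠ v2 := by simp [hv1, hv2, Fin.ext_iff]
      have hsub : ({v1, v2} : Finset (Fin n)) ⊆ S0 := by
        intro x hx
        simp only [Finset.mem_insert, Finset.mem_singleton] at hx
        simp only [hS0, Finset.mem_compl, Finset.mem_singleton]
        rcases hx with h | h <;> subst h <;> simp [hv1, hv2, hc, Fin.ext_iff]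
      calc 2 = 1 + 1 := rfl
        _ ≤ dsignal (Ain n) 2 v1 c + dsignal (Ain n) 2 v2 c :=
            add_le_add (one_le_sig ⟨rfl, by simp [hv1]⟩) (one_le_sig ⟨rfl, by simp [hv2]⟩)
        _ = ∑ v ∈ ({v1, v2} : Finset (Fin n)), dsignal (Ain n) 2 v c :=
            (Finset.sum_pair (f := fun v => dsignal (Ain n) 2 v c) h12).symm
        _ ≤ dreception (Ain n) 2 S0 c :=
            Finset.sum_le_sum_of_subset hsub
    · apply two_le_rec_of_mem
      simp [hS0, hwc]
  unfold gamma
  apply le_antisymm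
  · exact Nat.sInf_le ⟨S0, hdom, hcard⟩
  · refine le_csInf ⟨n - 1, S0, hdom, hcard⟩ ?_
    rintro k ⟨S, hS, rfl⟩
    exact card_ge hn orient_in hS

lemma gamma_out (hn : 3 ≤ n) : gamma (Aout n) 2 2 = n := by
  set c : Fin n := ⟨0, by omega⟩ with hc
  have hcenter : ∀ S : Finset (Fin n), IsDomSet (Aout n) 2 2 S → c ∈ S := by
    intro S hS
    by_contra hcs
    have hrec := hS c
    have : dreception (Aout n) 2 S c = 0 := by
      apply Finset.sum_eq_zero
      intro v hv
      have hvc : v ≠ c := fun h => hcs (h ▸ hv)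
      apply sig_eq_zero hvc
      rintro ⟨h1, h2⟩
      exact h2 rfl
    omega
  unfold gamma
  apply le_antisymm
  · exact Nat.sInf_le ⟨Finset.univ, univ_dom _, by simp⟩
  · refine le_csInf ⟨n, Finset.univ, univ_dom _, by simp⟩ ?_
    rintro k ⟨S, hS, rfl⟩
    have : (Finset.univ : Finset (Fin n)) ⊆ S := by
      intro v _
      by_cases hv0 : v.val = 0
      · have : v = c := Fin.ext hv0
        exact this ▸ hcenter S hS
      · exact leaf_mem hn orient_out hS v hv0
    calc n = (Finset.univ : Finset (Fin n)).card := by simp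
      _ ≤ S.card := Finset.card_le_card this

end Star

theorem stmt6 (n : ℕ) (hn : 3 ≤ n) :
    {k : ℕ | ∃ A : Fin n → Fin n → Prop, IsOrientation (starGraph n) A ∧ gamma A 2 2 = k}
      = {n - 1, n} := by
  ext k
  simp only [Set.mem_setOf_eq, Set.mem_insert_iff, Set.mem_singleton_iff]
  constructor
  · rintro ⟨A, hA, rfl⟩
    have hne : {k : ℕ | ∃ S : Finset (Fin n), IsDomSet A 2 2 S ∧ S.card = k}.Nonempty :=
      ⟨n, Finset.univ, univ_dom A, by simp⟩
    have hmem : ∃ S : Finset (Fin n), IsDomSet A 2 2 S ∧ S.card = gamma A 2 2 :=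
      Nat.sInf_mem hne
    obtain ⟨S, hS, hcard⟩ := hmem
    have h1 : n - 1 ≤ gamma A 2 2 := hcard ▸ card_ge hn hA hS
    have h2 : gamma A 2 2 ≤ n := gamma_le_n
    omega
  · rintro (rfl | rfl)
    · exact ⟨Ain n, orient_in, gamma_in hn⟩
    · exact ⟨Aout _, orient_out, gamma_out hn⟩
end

section
/- Let S_n be the star graph on n ≥ 3 vertices and let t = r > 2. Then the set of values γ_{t,r}(Ḡ) over all orientations Ḡ of S_n is exactly {2, 3, ..., n}. In particular, the minimum over orientations is 2, the maximum is n, and every intermediate integer value is attained. -/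
open Finset

/-! ### auxiliary lemmas -/


section Generic
variable {V : Type*} (A : V → V → Prop) (t : ℕ)

lemma dreach_one {u w : V} (h : A u w) : DReach A 1 u w := ⟨w, h, rfl⟩

lemma dreach_two {u x w : V} (h1 : A u x) (h2 : A x w) : DReach A 2 u w :=
  ⟨x, h1, w, h2, rfl⟩

lemma dsignal_le (u w : V) : dsignal A t u w ≤ t := by
  apply csSup_le'
  rintro m ⟨k, -, rfl⟩
  omega

lemma dsignal_self (u : V) : dsignal A t u u = t := by
  refine le_antisymm (dsignal_le A t u u) (le_csSup ?_ ⟨0, rfl, rfl⟩)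
  exact ⟨t, by rintro m ⟨k, -, rfl⟩; omega⟩

lemma dsignal_le_of_ne {u w : V} (h : u ≠ w) : dsignal A t u w ≤ t - 1 := by
  apply csSup_le'
  rintro m ⟨k, hk, rfl⟩
  cases k with
  | zero => exact absurd hk h
  | succ k => omega

lemma dsignal_eq_of_unique {u w : V} (d : ℕ)
    (h1 : DReach A d u w) (h2 : ∀ k, DReach A k u w → k = d) :
    dsignal A t u w = t - d := by
  have : {m : ℕ | ∃ n : ℕ, DReach A n u w ∧ m = t - n} = {t - d} := by
    ext m
    constructor
    · rintro ⟨k, hk, rfl⟩; rw [h2 k hk]; rfl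
    · rintro rfl; exact ⟨d, h1, rfl⟩
  rw [dsignal, this, csSup_singleton]

lemma dsignal_eq_zero {u w : V} (h : ∀ k, ¬ DReach A k u w) :
    dsignal A t u w = 0 := by
  have : {m : ℕ | ∃ n : ℕ, DReach A n u w ∧ m = t - n} = ∅ := by
    ext m
    simp only [Set.mem_setOf_eq, Set.mem_empty_iff_false, iff_false, not_exists]
    exact fun k hk => absurd hk.1 (h k)
  rw [dsignal, this, csSup_empty]
  rfl

lemma isDomSet_univ {r : ℕ} [Fintype V] (hrt : r ≤ t) : IsDomSet A t r Finset.univ := by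
  intro w
  rw [dreception]
  calc r ≤ dsignal A t w w := by rw [dsignal_self]; exact hrt
    _ ≤ ∑ v ∈ Finset.univ, dsignal A t v w :=
      Finset.single_le_sum (f := fun v => dsignal A t v w)
        (fun i _ => Nat.zero_le _) (Finset.mem_univ w)

lemma gamma_eq {r m : ℕ} [Fintype V]
    (h1 : ∃ S : Finset V, IsDomSet A t r S ∧ S.card = m)
    (h2 : ∀ S : Finset V, IsDomSet A t r S → m ≤ S.card) :
    gamma A t r = m := by
  refine le_antisymm (Nat.sInf_le ?_) (le_csInf ⟨m, h1⟩ ?_)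
  · obtain ⟨S, hS, hc⟩ := h1
    exact ⟨S, hS, hc⟩
  · rintro k ⟨S, hS, rfl⟩
    exact h2 S hS

lemma le_dreception_of_mem [Fintype V] {S : Finset V} {w : V} (hw : w ∈ S) :
    t ≤ dreception A t S w := by
  rw [dreception]
  calc t = dsignal A t w w := (dsignal_self A t w).symm
    _ ≤ ∑ v ∈ S, dsignal A t v w :=
      Finset.single_le_sum (f := fun v => dsignal A t v w) (fun i _ => Nat.zero_le _) hw

end Generic

/-! ### generic lower bound: no dominating set of size ≤ 1 -/

lemma two_le_card_domSet {V : Type*} [Fintype V] {A : V → V → Prop} {t : ℕ}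
    (hV : 3 ≤ Fintype.card V) [DecidableEq V] (ht : 2 < t) {S : Finset V}
    (hS : IsDomSet A t t S) : 2 ≤ S.card := by
  by_contra hc
  push_neg at hc
  have hlt : S.card < Fintype.card V := by omega
  have hcompl : Sᶜ.Nonempty := by
    rw [← Finset.card_pos, Finset.card_compl]
    omega
  obtain ⟨w, hw⟩ := hcompl
  rw [Finset.mem_compl] at hw
  have hrec := hS w
  have h1 : ∑ v ∈ S, dsignal A t v w ≤ ∑ _v ∈ S, (t - 1) :=
    Finset.sum_le_sum fun v hv => dsignal_le_of_ne A t (fun h => hw (h ▸ hv))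
  rw [Finset.sum_const, smul_eq_mul] at h1
  have h2 : S.card * (t - 1) ≤ 1 * (t - 1) := Nat.mul_le_mul_right _ (by omega)
  rw [one_mul] at h2
  rw [dreception] at hrec
  omega

/-! ### the star orientation determined by source set σ -/

section Aor
variable {n : ℕ} [NeZero n]

def Aor (σ : Finset (Fin n)) : Fin n → Fin n → Prop :=
  fun u v => (v = 0 ∧ u ∈ σ) ∨ (u = 0 ∧ v ≠ 0 ∧ v ∉ σ)

variable {σ : Finset (Fin n)} (h0 : 0 ∉ σ)

lemma fin_eq_zero {u : Fin n} (h : u.val = 0) : u = 0 := by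
  ext; simp [h]

include h0 in
lemma Aor_isOrientation : IsOrientation (starGraph n) (Aor σ) := by
  constructor
  · rintro u v (⟨rfl, hu⟩ | ⟨rfl, hv, -⟩)
    · exact ⟨fun h => h0 (h ▸ hu), Or.inr rfl⟩
    · exact ⟨fun h => hv h.symm, Or.inl rfl⟩
  · rintro u v ⟨huv, (hu | hv)⟩
    · have hu0 : u = 0 := fin_eq_zero hu
      subst hu0
      have hv0 : v ≠ 0 := fun h => huv h.symm
      constructor
      · rintro (⟨rfl, h⟩ | ⟨-, -, hvs⟩)
        · exact absurd h h0
        · rintro (⟨-, h⟩ | ⟨h, -, -⟩)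
          · exact hvs h
          · exact hv0 h
      · intro h
        exact Or.inr ⟨rfl, hv0, fun hvs => h (Or.inl ⟨rfl, hvs⟩)⟩
    · have hv0 : v = 0 := fin_eq_zero hv
      subst hv0
      constructor
      · rintro (⟨-, hus⟩ | ⟨rfl, h, -⟩)
        · rintro (⟨rfl, h⟩ | ⟨-, hu0, hus'⟩)
          · exact h0 h
          · exact hus' hus
        · exact absurd rfl h
      · intro h
        refine Or.inl ⟨rfl, ?_⟩
        by_contra hus
        exact h (Or.inr ⟨rfl, fun h' => huv h', hus⟩)

include h0 in
lemma Aor_two_arcs {a b c : Fin n} (h1 : Aor σ a b) (h2 : Aor σ b c) :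
    a ∈ σ ∧ b = 0 ∧ c ≠ 0 ∧ c ∉ σ := by
  rcases h1 with ⟨rfl, ha⟩ | ⟨rfl, hb, hbs⟩
  · rcases h2 with ⟨rfl, hb⟩ | ⟨-, hc, hcs⟩
    · exact absurd hb h0
    · exact ⟨ha, rfl, hc, hcs⟩
  · rcases h2 with ⟨-, hb'⟩ | ⟨h, -, -⟩
    · exact absurd hb' hbs
    · exact absurd h hb

include h0 in
lemma Aor_reach {k : ℕ} {u w : Fin n} (h : DReach (Aor σ) k u w) :
    (k = 0 ∧ u = w) ∨ (k = 1 ∧ Aor σ u w) ∨ (k = 2 ∧ u ∈ σ ∧ w ≠ 0 ∧ w ∉ σ) := by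
  match k, h with
  | 0, h => exact Or.inl ⟨rfl, h⟩
  | 1, ⟨x, hx, (h : x = w)⟩ => exact Or.inr (Or.inl ⟨rfl, h ▸ hx⟩)
  | 2, ⟨x, hx, y, hy, (h : y = w)⟩ =>
    obtain ⟨h1, -, h3, h4⟩ := Aor_two_arcs h0 hx hy
    exact Or.inr (Or.inr ⟨rfl, h1, h ▸ h3, h ▸ h4⟩)
  | (m+3), ⟨x, hx, y, hy, z, hz, _⟩ =>
    obtain ⟨-, -, hy0, hys⟩ := Aor_two_arcs h0 hx hy
    rcases hz with ⟨-, h⟩ | ⟨h, -, -⟩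
    · exact absurd h hys
    · exact absurd h hy0

variable (t : ℕ)

include h0 in
lemma dsig_src_center {a : Fin n} (ha : a ∈ σ) :
    dsignal (Aor σ) t a 0 = t - 1 := by
  apply dsignal_eq_of_unique (Aor σ) t 1 (dreach_one _ (Or.inl ⟨rfl, ha⟩))
  intro k hk
  rcases Aor_reach h0 hk with ⟨-, rfl⟩ | ⟨h, -⟩ | ⟨-, -, h, -⟩
  · exact absurd ha h0
  · exact h
  · exact absurd rfl h

include h0 in
lemma dsig_src_sink {a w : Fin n} (ha : a ∈ σ) (hw : w ∉ σ) (hw0 : w ≠ 0) :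
    dsignal (Aor σ) t a w = t - 2 := by
  apply dsignal_eq_of_unique (Aor σ) t 2
    (dreach_two _ (Or.inl ⟨rfl, ha⟩) (Or.inr ⟨rfl, hw0, hw⟩))
  intro k hk
  rcases Aor_reach h0 hk with ⟨-, rfl⟩ | ⟨h, harc⟩ | ⟨h, -⟩
  · exact absurd ha hw
  · rcases harc with ⟨rfl, -⟩ | ⟨rfl, -, -⟩
    · exact absurd rfl hw0
    · exact absurd ha h0
  · exact h

include h0 in
lemma dsig_center_sink {w : Fin n} (hw : w ∉ σ) (hw0 : w ≠ 0) :
    dsignal (Aor σ) t 0 w = t - 1 := by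
  apply dsignal_eq_of_unique (Aor σ) t 1 (dreach_one _ (Or.inr ⟨rfl, hw0, hw⟩))
  intro k hk
  rcases Aor_reach h0 hk with ⟨-, h⟩ | ⟨h, -⟩ | ⟨-, h, -⟩
  · exact absurd h.symm hw0
  · exact h
  · exact absurd h h0

include h0 in
lemma dsig_to_src {v w : Fin n} (hw : w ∈ σ) (hvw : v ≠ w) :
    dsignal (Aor σ) t v w = 0 := by
  apply dsignal_eq_zero
  intro k hk
  rcases Aor_reach h0 hk with ⟨-, h⟩ | ⟨-, harc⟩ | ⟨-, -, -, h⟩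
  · exact hvw h
  · rcases harc with ⟨rfl, -⟩ | ⟨-, -, h⟩
    · exact h0 hw
    · exact h hw
  · exact h hw

include h0 in
lemma dsig_from_sink {v w : Fin n} (hv : v ∉ σ) (hv0 : v ≠ 0) (hvw : v ≠ w) :
    dsignal (Aor σ) t v w = 0 := by
  apply dsignal_eq_zero
  intro k hk
  rcases Aor_reach h0 hk with ⟨-, h⟩ | ⟨-, harc⟩ | ⟨-, h, -⟩
  · exact hvw h
  · rcases harc with ⟨-, h⟩ | ⟨h, -, -⟩
    · exact hv h
    · exact hv0 h
  · exact hv h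

include h0 in
lemma srcs_subset_domSet (htpos : 0 < t) {S : Finset (Fin n)}
    (hS : IsDomSet (Aor σ) t t S) : σ ⊆ S := by
  intro a ha
  by_contra haS
  have hrec := hS a
  rw [dreception,
    Finset.sum_eq_zero (fun v hv => dsig_to_src h0 t ha (fun h => haS (h ▸ hv)))] at hrec
  omega

include h0 in
lemma reception_sigma_sink {w : Fin n} (hw : w ∉ σ) (hw0 : w ≠ 0) :
    dreception (Aor σ) t σ w = σ.card * (t - 2) := by
  rw [dreception, Finset.sum_congr rfl (fun v hv => dsig_src_sink h0 t hv hw hw0),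
    Finset.sum_const, smul_eq_mul]

include h0 in
lemma reception_sigma_center :
    dreception (Aor σ) t σ 0 = σ.card * (t - 1) := by
  rw [dreception, Finset.sum_congr rfl (fun v hv => dsig_src_center h0 t hv),
    Finset.sum_const, smul_eq_mul]

include h0 in
lemma isDomSet_sigma (ht : 2 < t) (hcard : t ≤ σ.card * (t - 2)) :
    IsDomSet (Aor σ) t t σ := by
  intro w
  by_cases hw : w ∈ σ
  · exact le_dreception_of_mem _ _ hw
  · by_cases hw0 : w = 0
    · subst hw0
      rw [reception_sigma_center h0 t]
      exact le_trans hcard (Nat.mul_le_mul le_rfl (by omega))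
    · rw [reception_sigma_sink h0 t hw hw0]
      exact hcard

include h0 in
lemma isDomSet_union (ht : 2 < t) (hne : σ.Nonempty) :
    IsDomSet (Aor σ) t t (σ ∪ {0}) := by
  intro w
  by_cases hw : w ∈ σ ∪ {0}
  · exact le_dreception_of_mem _ _ hw
  · rw [Finset.mem_union, Finset.mem_singleton] at hw
    push_neg at hw
    obtain ⟨hws, hw0⟩ := hw
    obtain ⟨a, ha⟩ := hne
    have ha0 : a ≠ 0 := fun h => h0 (h ▸ ha)
    have hsub : ({a, 0} : Finset (Fin n)) ⊆ σ ∪ {0} := by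
      intro x hx
      rcases Finset.mem_insert.mp hx with rfl | hx
      · exact Finset.mem_union_left _ ha
      · exact Finset.mem_union_right _ hx
    calc t ≤ (t - 2) + (t - 1) := by omega
      _ = dsignal (Aor σ) t a w + dsignal (Aor σ) t 0 w := by
          rw [dsig_src_sink h0 t ha hws hw0, dsig_center_sink h0 t hws hw0]
      _ = ∑ v ∈ ({a, 0} : Finset (Fin n)), dsignal (Aor σ) t v w :=
          (Finset.sum_pair (f := fun v => dsignal (Aor σ) t v w) ha0).symm
      _ ≤ ∑ v ∈ σ ∪ {0}, dsignal (Aor σ) t v w :=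
          Finset.sum_le_sum_of_subset hsub
      _ = dreception (Aor σ) t (σ ∪ {0}) w := rfl

lemma domSet_empty_eq_univ (ht : 2 < t) {S : Finset (Fin n)}
    (hS : IsDomSet (Aor (∅ : Finset (Fin n))) t t S) : S = Finset.univ := by
  have h0' : (0 : Fin n) ∉ (∅ : Finset (Fin n)) := Finset.notMem_empty _
  have hc : (0 : Fin n) ∈ S := by
    by_contra h
    have hrec := hS 0
    rw [dreception, Finset.sum_eq_zero] at hrec
    · omega
    · intro v hv
      have hv0 : v ≠ 0 := fun e => h (e ▸ hv)
      exact dsig_from_sink h0' t (Finset.notMem_empty v) hv0 hv0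
  refine Finset.eq_univ_iff_forall.mpr fun w => ?_
  by_contra hwS
  have hw0 : w ≠ 0 := fun e => hwS (e ▸ hc)
  have hrec := hS w
  have hle : dreception (Aor ∅) t S w ≤ ∑ v ∈ S, (if v = (0 : Fin n) then t - 1 else 0) := by
    rw [dreception]
    apply Finset.sum_le_sum
    intro v hv
    by_cases hv0 : v = 0
    · subst hv0
      rw [dsig_center_sink h0' t (Finset.notMem_empty w) hw0]
      simp
    · rw [dsig_from_sink h0' t (Finset.notMem_empty v) hv0 (by rintro rfl; exact hwS hv)]
      simp
  rw [Finset.sum_ite_eq' S (0 : Fin n) (fun _ => t - 1), if_pos hc] at hle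
  omega

end Aor

theorem stmt7 (n : ℕ) (hn : 3 ≤ n) (t r : ℕ) (htr : t = r) (ht : 2 < t) :
    {k : ℕ | ∃ A : Fin n → Fin n → Prop, IsOrientation (starGraph n) A ∧ gamma A t r = k}
      = Set.Icc 2 n := by
  subst htr
  haveI : NeZero n := ⟨by omega⟩
  have hcard_univ : (Finset.univ : Finset (Fin n)).card = n := by
    rw [Finset.card_univ, Fintype.card_fin]
  have hcard_erase : ((Finset.univ : Finset (Fin n)).erase 0).card = n - 1 := by
    rw [Finset.card_erase_of_mem (Finset.mem_univ _), hcard_univ]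
  ext k
  simp only [Set.mem_setOf_eq, Set.mem_Icc]
  constructor
  · rintro ⟨A, hA, rfl⟩
    have hne : {m : ℕ | ∃ S : Finset (Fin n), IsDomSet A t t S ∧ S.card = m}.Nonempty :=
      ⟨n, Finset.univ, isDomSet_univ A t le_rfl, hcard_univ⟩
    constructor
    · obtain ⟨S, hS, hcard⟩ := Nat.sInf_mem hne
      have h2 := two_le_card_domSet (by rw [Fintype.card_fin]; omega) ht hS
      rw [gamma, ← hcard]
      exact h2
    · exact Nat.sInf_le ⟨Finset.univ, isDomSet_univ A t le_rfl, hcard_univ⟩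
  · rintro ⟨hk2, hkn⟩
    by_cases hkeq : k = n
    · subst hkeq
      refine ⟨Aor (∅ : Finset (Fin k)), Aor_isOrientation (Finset.notMem_empty _), ?_⟩
      apply gamma_eq
      · exact ⟨Finset.univ, isDomSet_univ _ t le_rfl, hcard_univ⟩
      · intro S hS
        rw [domSet_empty_eq_univ t ht hS, hcard_univ]
    · have hkn' : k ≤ n - 1 := by omega
      by_cases hB : t ≤ (k - 1) * (t - 2)
      · -- sources alone suffice: σ of size k
        obtain ⟨σ, hσsub, hσcard⟩ :=
          Finset.exists_subset_card_eq (s := (Finset.univ : Finset (Fin n)).erase 0)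
            (n := k) (by omega)
        have h0σ : (0 : Fin n) ∉ σ := fun h => (Finset.mem_erase.mp (hσsub h)).1 rfl
        refine ⟨Aor σ, Aor_isOrientation h0σ, ?_⟩
        apply gamma_eq
        · refine ⟨σ, isDomSet_sigma h0σ t ht ?_, hσcard⟩
          rw [hσcard]
          exact le_trans hB (Nat.mul_le_mul (by omega) le_rfl)
        · intro S hS
          rw [← hσcard]
          exact Finset.card_le_card (srcs_subset_domSet h0σ t (by omega) hS)
      · -- need the center too: σ of size k - 1
        push_neg at hB
        obtain ⟨σ, hσsub, hσcard⟩ :=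
          Finset.exists_subset_card_eq (s := (Finset.univ : Finset (Fin n)).erase 0)
            (n := k - 1) (by omega)
        have h0σ : (0 : Fin n) ∉ σ := fun h => (Finset.mem_erase.mp (hσsub h)).1 rfl
        have hσne : σ.Nonempty := Finset.card_pos.mp (by rw [hσcard]; omega)
        have hss : σ ⊂ (Finset.univ : Finset (Fin n)).erase 0 :=
          hσsub.ssubset_of_ne (by
            intro h
            rw [h, hcard_erase] at hσcard
            omega)
        obtain ⟨w, hwE, hwσ⟩ := Finset.exists_of_ssubset hss
        have hw0 : w ≠ 0 := (Finset.mem_erase.mp hwE).1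
        refine ⟨Aor σ, Aor_isOrientation h0σ, ?_⟩
        apply gamma_eq
        · refine ⟨σ ∪ {0}, isDomSet_union h0σ t ht hσne, ?_⟩
          rw [Finset.card_union_of_disjoint (Finset.disjoint_singleton_right.mpr h0σ),
            hσcard, Finset.card_singleton]
          omega
        · intro S hS
          have hsub := srcs_subset_domSet h0σ t (by omega) hS
          by_contra hcS
          push_neg at hcS
          have hSeq : S = σ := (Finset.eq_of_subset_of_card_le hsub (by rw [hσcard]; omega)).symm
          have hrec := hS w
          rw [hSeq, reception_sigma_sink h0σ t hwσ hw0, hσcard] at hrec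
          exact absurd hrec (Nat.not_le.mpr hB)
end

section
/- Consider the infinite grid graph ℤ×ℤ. There exists an orientation of ℤ×ℤ together with a set S of broadcasting vertices of density 1/2 (i.e., S occupies every other column entirely) that forms an efficient directed (2,2) broadcast dominating set: every vertex not in S has exactly two broadcasting in-neighbors, hence reception exactly 2. -/
/-- Adjacency in the infinite grid graph `ℤ × ℤ`. -/
def gridAdj (p q : ℤ × ℤ) : Prop := |p.1 - q.1| + |p.2 - q.2| = 1

/-- `A` is an orientation of the infinite grid graph. -/
def IsOrientationZ (A : ℤ × ℤ → ℤ × ℤ → Prop) : Prop :=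
  (∀ u v, A u v → gridAdj u v) ∧ ∀ u v, gridAdj u v → (A u v ↔ ¬ A v u)

/-- The directed `(2,2)` reception at `w` from broadcast set `S`: a broadcast vertex of
strength 2 gives itself signal 2 and each of its out-neighbors signal 1. -/
noncomputable def rec22 (A : ℤ × ℤ → ℤ × ℤ → Prop) (S : Set (ℤ × ℤ)) (w : ℤ × ℤ) : ℕ :=
  S.indicator (fun _ => 2) w + Set.ncard {v : ℤ × ℤ | v ∈ S ∧ A v w}

/-- `S` is a directed `(2,2)` broadcast dominating set of the oriented grid `A`. -/
def IsDom22 (A : ℤ × ℤ → ℤ × ℤ → Prop) (S : Set (ℤ × ℤ)) : Prop :=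
  ∀ w, 2 ≤ rec22 A S w

/-- `S` is efficient (for `t = r = 2`): every vertex outside `S` has reception exactly 2. -/
def IsEff22 (A : ℤ × ℤ → ℤ × ℤ → Prop) (S : Set (ℤ × ℤ)) : Prop :=
  ∀ w ∉ S, rec22 A S w = 2

/-- `S ⊆ ℤ × ℤ` has density `d`. -/
def HasDensity (S : Set (ℤ × ℤ)) (d : ℝ) : Prop :=
  Filter.Tendsto
    (fun n : ℕ =>
      (Set.ncard (S ∩ Set.Icc (-(n : ℤ)) (n : ℤ) ×ˢ Set.Icc (-(n : ℤ)) (n : ℤ)) : ℝ) /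
        ((2 * (n : ℝ) + 1) ^ 2))
    Filter.atTop (nhds d)

/-- The orientation: horizontal arcs go from even to odd columns; vertical arcs go up. -/
def myA (u v : ℤ × ℤ) : Prop :=
  gridAdj u v ∧ ((u.2 = v.2 ∧ Even u.1) ∨ (u.1 = v.1 ∧ v.2 = u.2 + 1))

/-- The broadcast set: even columns. -/
def myS : Set (ℤ × ℤ) := {p | Even p.1}

lemma ncard_prod' (s t : Set ℤ) : (s ×ˢ t).ncard = s.ncard * t.ncard := by
  rw [← Nat.card_coe_set_eq, ← Nat.card_coe_set_eq, ← Nat.card_coe_set_eq,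
    Nat.card_congr (Equiv.Set.prod s t), Nat.card_prod]

lemma ncard_Icc (a b : ℤ) : (Set.Icc a b).ncard = (b + 1 - a).toNat := by
  rw [← Finset.coe_Icc, Set.ncard_coe_finset, Int.card_Icc]

lemma inNbrs (w : ℤ × ℤ) (hw : ¬ Even w.1) :
    {v : ℤ × ℤ | v ∈ myS ∧ myA v w} = {(w.1 - 1, w.2), (w.1 + 1, w.2)} := by
  ext ⟨a, b⟩
  simp only [myS, myA, gridAdj, Set.mem_setOf_eq, Set.mem_insert_iff, Set.mem_singleton_iff,
    Prod.mk.injEq, Int.abs_eq_natAbs, Int.even_iff] at *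
  omega

lemma inNbrs_card (w : ℤ × ℤ) (hw : w ∉ myS) :
    Set.ncard {v : ℤ × ℤ | v ∈ myS ∧ myA v w} = 2 := by
  rw [inNbrs w hw, Set.ncard_pair (by simp [Prod.ext_iff]; omega)]

theorem stmt16 :
    ∃ (A : ℤ × ℤ → ℤ × ℤ → Prop) (S : Set (ℤ × ℤ)),
      IsOrientationZ A ∧ HasDensity S (1 / 2) ∧ IsDom22 A S ∧ IsEff22 A S ∧
      ∀ w ∉ S, Set.ncard {v : ℤ × ℤ | v ∈ S ∧ A v w} = 2 := by
  refine ⟨myA, myS, ⟨fun u v h => h.1, fun u v h => ?_⟩, ?_, ?_, ?_, fun w hw => inNbrs_card w hw⟩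
  · simp only [myA, gridAdj, Int.abs_eq_natAbs, Int.even_iff] at *
    omega
  · -- density
    have key : ∀ n : ℕ, (myS ∩ Set.Icc (-(n : ℤ)) (n : ℤ) ×ˢ Set.Icc (-(n : ℤ)) (n : ℤ)).ncard
        = (2 * (n / 2) + 1) * (2 * n + 1) := by
      intro n
      have h1 : myS ∩ Set.Icc (-(n : ℤ)) (n : ℤ) ×ˢ Set.Icc (-(n : ℤ)) (n : ℤ)
          = ({x : ℤ | Even x} ∩ Set.Icc (-(n : ℤ)) (n : ℤ)) ×ˢ Set.Icc (-(n : ℤ)) (n : ℤ) := by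
        ext ⟨a, b⟩
        simp only [myS, Set.mem_inter_iff, Set.mem_prod, Set.mem_setOf_eq]
        tauto
      have h2 : {x : ℤ | Even x} ∩ Set.Icc (-(n : ℤ)) (n : ℤ)
          = (fun k : ℤ => 2 * k) '' Set.Icc (-((n / 2 : ℕ) : ℤ)) ((n / 2 : ℕ) : ℤ) := by
        ext x
        simp only [Set.mem_inter_iff, Set.mem_setOf_eq, Set.mem_Icc, Set.mem_image,
          Int.even_iff]
        constructor
        · rintro ⟨hx, h3, h4⟩
          exact ⟨x / 2, by omega, by omega⟩
        · rintro ⟨k, ⟨hk1, hk2⟩, rfl⟩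
          omega
      rw [h1, ncard_prod', h2, Set.ncard_image_of_injective _ (fun a b h => by omega),
        ncard_Icc, ncard_Icc]
      congr 1 <;> omega
    have hne : ∀ n : ℕ, (2 * (n : ℝ) + 1) ≠ 0 := fun n => by positivity
    have heq : ∀ n : ℕ,
        ((myS ∩ Set.Icc (-(n : ℤ)) (n : ℤ) ×ˢ Set.Icc (-(n : ℤ)) (n : ℤ)).ncard : ℝ) /
          ((2 * (n : ℝ) + 1) ^ 2) = ((2 * (n / 2 : ℕ) + 1 : ℕ) : ℝ) / (2 * (n : ℝ) + 1) := by
      intro n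
      rw [key n]
      push_cast
      field_simp
    unfold HasDensity
    have hg : Filter.Tendsto (fun n : ℕ => (2 * (n : ℝ) + 1)⁻¹) Filter.atTop (nhds 0) := by
      apply tendsto_inv_atTop_zero.comp
      apply Filter.tendsto_atTop_mono (fun n : ℕ => ?_) tendsto_natCast_atTop_atTop
      have : (0 : ℝ) ≤ (n : ℝ) := Nat.cast_nonneg n
      linarith
    have hlo : Filter.Tendsto (fun n : ℕ => (1 : ℝ) / 2 - (1 / 2) * (2 * (n : ℝ) + 1)⁻¹)
        Filter.atTop (nhds (1 / 2)) := by
      have := tendsto_const_nhds (α := ℕ) (f := Filter.atTop) (x := (1 : ℝ) / 2)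
      simpa using this.sub (hg.const_mul (1 / 2 : ℝ))
    have hhi : Filter.Tendsto (fun n : ℕ => (1 : ℝ) / 2 + (1 / 2) * (2 * (n : ℝ) + 1)⁻¹)
        Filter.atTop (nhds (1 / 2)) := by
      have := tendsto_const_nhds (α := ℕ) (f := Filter.atTop) (x := (1 : ℝ) / 2)
      simpa using this.add (hg.const_mul (1 / 2 : ℝ))
    refine tendsto_of_tendsto_of_tendsto_of_le_of_le hlo hhi (fun n => ?_) (fun n => ?_)
    · rw [heq n]
      have h1 : (n : ℝ) ≤ ((2 * (n / 2 : ℕ) + 1 : ℕ) : ℝ) := by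
        exact_mod_cast Nat.cast_le.mpr (by omega : n ≤ 2 * (n / 2) + 1)
      have hb : (0 : ℝ) < 2 * (n : ℝ) + 1 := by positivity
      calc (1 : ℝ) / 2 - 1 / 2 * (2 * (n : ℝ) + 1)⁻¹ = (n : ℝ) / (2 * (n : ℝ) + 1) := by
            field_simp
            ring
        _ ≤ _ := by
            rw [div_le_div_iff₀ hb hb]
            exact mul_le_mul_of_nonneg_right h1 hb.le
    · rw [heq n]
      have h1 : ((2 * (n / 2 : ℕ) + 1 : ℕ) : ℝ) ≤ (n : ℝ) + 1 := by
        calc ((2 * (n / 2 : ℕ) + 1 : ℕ) : ℝ) ≤ ((n + 1 : ℕ) : ℝ) :=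
              Nat.cast_le.mpr (by omega)
          _ = (n : ℝ) + 1 := by push_cast; ring
      have hb : (0 : ℝ) < 2 * (n : ℝ) + 1 := by positivity
      calc ((2 * (n / 2 : ℕ) + 1 : ℕ) : ℝ) / (2 * (n : ℝ) + 1)
            ≤ ((n : ℝ) + 1) / (2 * (n : ℝ) + 1) := by
            rw [div_le_div_iff₀ hb hb]
            exact mul_le_mul_of_nonneg_right h1 hb.le
        _ = 1 / 2 + 1 / 2 * (2 * (n : ℝ) + 1)⁻¹ := by
            field_simp
            ring
  · -- IsDom22
    intro w
    by_cases hw : w ∈ myS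
    · simp [rec22, Set.indicator_of_mem hw]
    · rw [rec22, Set.indicator_of_notMem hw, inNbrs_card w hw]
  · -- IsEff22
    intro w hw
    rw [rec22, Set.indicator_of_notMem hw, inNbrs_card w hw]
end

section
/- There exists an orientation of the infinite grid ℤ×ℤ and a set S of broadcasting vertices of density 1/3 that forms an efficient directed (2,2) broadcast dominating set: S consists of every third column together with an appropriate orientation so every vertex outside S has exactly two broadcasting in-neighbors. -/
/-! ### The construction -/

/-- The broadcast set: diagonals `x + y ≡ 0 (mod 3)`. -/
def S3 : Set (ℤ × ℤ) := {p | (p.1 + p.2) % 3 = 0}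

/-- The orientation: edges leave `S3`; other edges oriented lexicographically. -/
def A3 (u v : ℤ × ℤ) : Prop :=
  gridAdj u v ∧ ((u.1 + u.2) % 3 = 0 ∨
    ((u.1 + u.2) % 3 ≠ 0 ∧ (v.1 + v.2) % 3 ≠ 0 ∧
      (u.1 < v.1 ∨ (u.1 = v.1 ∧ u.2 < v.2))))

lemma gridAdj_iff (v w : ℤ × ℤ) : gridAdj v w ↔
    (v.1 = w.1 + 1 ∧ v.2 = w.2) ∨ (v.1 = w.1 - 1 ∧ v.2 = w.2) ∨
    (v.1 = w.1 ∧ v.2 = w.2 + 1) ∨ (v.1 = w.1 ∧ v.2 = w.2 - 1) := by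
  unfold gridAdj
  rw [Int.abs_eq_natAbs, Int.abs_eq_natAbs]; omega

lemma gridAdj_symm {v w : ℤ × ℤ} (h : gridAdj v w) : gridAdj w v := by
  rw [gridAdj_iff] at h ⊢; omega

lemma orient3 : IsOrientationZ A3 := by
  refine ⟨fun u v h => h.1, fun u v h => ?_⟩
  have h' : gridAdj v u := gridAdj_symm h
  simp only [A3, h, h', true_and]
  rw [gridAdj_iff] at h
  obtain ⟨a, b⟩ := u; obtain ⟨c, d⟩ := v
  simp only at h ⊢
  omega

lemma inset (w : ℤ × ℤ) (hw : w ∉ S3) :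
    {v : ℤ × ℤ | v ∈ S3 ∧ A3 v w} =
      if (w.1 + w.2) % 3 = 1 then {(w.1 - 1, w.2), (w.1, w.2 - 1)}
      else {(w.1 + 1, w.2), (w.1, w.2 + 1)} := by
  simp only [S3, Set.mem_setOf_eq] at hw
  split_ifs with h <;>
  · ext ⟨a, b⟩
    simp only [Set.mem_setOf_eq, S3, A3, gridAdj_iff, Set.mem_insert_iff,
      Set.mem_singleton_iff, Prod.ext_iff]
    omega

lemma inset_card (w : ℤ × ℤ) (hw : w ∉ S3) :
    Set.ncard {v : ℤ × ℤ | v ∈ S3 ∧ A3 v w} = 2 := by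
  rw [inset w hw]
  split_ifs <;> exact Set.ncard_pair (by simp [Prod.ext_iff])

/-! ### Counting -/

lemma mult3_card (m : ℕ) (b c : ℤ) :
    ((Finset.Ico b (b + m)).filter (fun x => (x + c) % 3 = 0)).card
      = ((b + c + m + 2) / 3 - (b + c + 2) / 3).toNat := by
  induction m with
  | zero => simp
  | succ m ih =>
    have hins : Finset.Ico b (b + ((m : ℤ) + 1)) = insert (b + m) (Finset.Ico b (b + m)) := by
      ext x; simp only [Finset.mem_Ico, Finset.mem_insert]; omega
    push_cast
    rw [hins, Finset.filter_insert]
    split_ifs with h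
    · rw [Finset.card_insert_of_notMem (by simp)]
      push_cast at ih
      omega
    · push_cast at ih
      omega

lemma row_card (n : ℕ) (y : ℤ) :
    ((Finset.Icc (-(n : ℤ)) n).filter (fun x => (x + y) % 3 = 0)).card
      = ((y + n + 3) / 3 - (y - n + 2) / 3).toNat := by
  have h : Finset.Icc (-(n : ℤ)) n = Finset.Ico (-(n : ℤ)) (-(n : ℤ) + (2 * n + 1 : ℕ)) := by
    ext x; simp only [Finset.mem_Icc, Finset.mem_Ico]; push_cast; omega
  rw [h, mult3_card]
  push_cast
  have : -(n : ℤ) + y + (2 * n + 1) + 2 = y + n + 3 := by ring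
  rw [this]
  congr 2
  ring_nf

lemma total_card (n : ℕ) :
    ((Finset.Icc (-(n : ℤ)) n ×ˢ Finset.Icc (-(n : ℤ)) n).filter
        (fun p => (p.1 + p.2) % 3 = 0)).card
      = ∑ y ∈ Finset.Icc (-(n : ℤ)) n, ((y + n + 3) / 3 - (y - n + 2) / 3).toNat := by
  rw [Finset.card_eq_sum_card_fiberwise
    (f := Prod.snd) (t := Finset.Icc (-(n : ℤ)) n)
    (fun p hp => by simp only [Finset.mem_coe, Finset.mem_filter, Finset.mem_product] at hp; exact hp.1.2)]
  refine Finset.sum_congr rfl fun y hy => ?_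
  rw [← row_card]
  apply Finset.card_bij (fun p _ => p.1)
  · rintro ⟨a, b⟩ hp
    simp only [Finset.mem_filter, Finset.mem_product] at hp ⊢
    obtain ⟨⟨⟨h1, h2⟩, h3⟩, h4⟩ := hp
    subst h4
    exact ⟨h1, h3⟩
  · rintro ⟨a, b⟩ ha ⟨c, d⟩ hc h
    simp only [Finset.mem_filter] at ha hc
    simp only at h
    simp [Prod.ext_iff, h, ha.2, hc.2]
  · intro x hx
    simp only [Finset.mem_filter] at hx
    have hmem : (x, y) ∈ Finset.filter (fun p : ℤ × ℤ => (p.1 + p.2) % 3 = 0)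
        (Finset.Icc (-(n : ℤ)) n ×ˢ Finset.Icc (-(n : ℤ)) n) :=
      Finset.mem_filter.mpr ⟨Finset.mem_product.mpr ⟨hx.1, hy⟩, hx.2⟩
    exact ⟨(x, y), Finset.mem_filter.mpr ⟨hmem, rfl⟩, rfl⟩

lemma total_bounds (n : ℕ) :
    (2 * n + 1) * ((2 * n + 1) / 3) ≤
      ((Finset.Icc (-(n : ℤ)) n ×ˢ Finset.Icc (-(n : ℤ)) n).filter
        (fun p => (p.1 + p.2) % 3 = 0)).card ∧
    ((Finset.Icc (-(n : ℤ)) n ×ˢ Finset.Icc (-(n : ℤ)) n).filter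
        (fun p => (p.1 + p.2) % 3 = 0)).card ≤ (2 * n + 1) * ((2 * n + 1) / 3 + 1) := by
  rw [total_card]
  have hcard : (Finset.Icc (-(n : ℤ)) n).card = 2 * n + 1 := by
    rw [Int.card_Icc]; omega
  constructor
  · calc (2 * n + 1) * ((2 * n + 1) / 3)
        = ∑ _y ∈ Finset.Icc (-(n : ℤ)) n, (2 * n + 1) / 3 := by
          rw [Finset.sum_const, hcard, smul_eq_mul]
      _ ≤ _ := Finset.sum_le_sum fun y _ => by omega
  · calc _ ≤ ∑ _y ∈ Finset.Icc (-(n : ℤ)) n, ((2 * n + 1) / 3 + 1) :=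
          Finset.sum_le_sum fun y _ => by omega
      _ = _ := by rw [Finset.sum_const, hcard, smul_eq_mul]

lemma ncard_box (n : ℕ) :
    Set.ncard (S3 ∩ Set.Icc (-(n : ℤ)) (n : ℤ) ×ˢ Set.Icc (-(n : ℤ)) (n : ℤ))
      = ((Finset.Icc (-(n : ℤ)) n ×ˢ Finset.Icc (-(n : ℤ)) n).filter
          (fun p => (p.1 + p.2) % 3 = 0)).card := by
  rw [← Set.ncard_coe_finset]
  congr 1
  ext ⟨a, b⟩
  simp only [Set.mem_inter_iff, Set.mem_prod, Set.mem_Icc, S3, Set.mem_setOf_eq,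
    Finset.coe_filter, Finset.mem_product, Finset.mem_Icc]
  tauto

lemma density3 : HasDensity S3 (1 / 3) := by
  unfold HasDensity
  have hN : ∀ n : ℕ, (0 : ℝ) < 2 * n + 1 := fun n => by positivity
  have htop : Filter.Tendsto (fun n : ℕ => 2 * (n : ℝ) + 1) Filter.atTop Filter.atTop := by
    apply Filter.tendsto_atTop_add_const_right
    exact (tendsto_natCast_atTop_atTop).const_mul_atTop two_pos
  have h0 : Filter.Tendsto (fun n : ℕ => 1 / (2 * (n : ℝ) + 1)) Filter.atTop (nhds 0) := by
    simpa [Function.comp_def, one_div] using tendsto_inv_atTop_zero.comp htop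
  have hlo : Filter.Tendsto (fun n : ℕ => 1 / 3 - 1 / (2 * (n : ℝ) + 1))
      Filter.atTop (nhds (1 / 3)) := by
    simpa using Filter.Tendsto.sub (tendsto_const_nhds (x := (1 / 3 : ℝ))) h0
  have hhi : Filter.Tendsto (fun n : ℕ => 1 / 3 + 1 / (2 * (n : ℝ) + 1))
      Filter.atTop (nhds (1 / 3)) := by
    simpa using Filter.Tendsto.add (tendsto_const_nhds (x := (1 / 3 : ℝ))) h0
  refine tendsto_of_tendsto_of_tendsto_of_le_of_le hlo hhi ?_ ?_
  · intro n
    have hb := (total_bounds n).1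
    simp only [ncard_box]
    set T := ((Finset.Icc (-(n : ℤ)) n ×ˢ Finset.Icc (-(n : ℤ)) n).filter
        (fun p => (p.1 + p.2) % 3 = 0)).card
    set k : ℕ := (2 * n + 1) / 3 with hk
    have h1 : ((2 * n + 1 : ℕ) : ℝ) * k ≤ T := by exact_mod_cast hb
    have h2 : (2 * (n : ℝ) + 1) ≤ 3 * k + 2 := by
      have : 2 * n + 1 ≤ 3 * k + 2 := by omega
      exact_mod_cast this
    have hNn := hN n
    rw [le_div_iff₀ (by positivity)]
    push_cast at h1
    have e : (1 / 3 - 1 / (2 * (n : ℝ) + 1)) * (2 * (n : ℝ) + 1) ^ 2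
        = ((2 * (n : ℝ) + 1) * (2 * (n : ℝ) + 1)) / 3 - (2 * (n : ℝ) + 1) := by
      field_simp
    rw [e]
    have hmul : (2 * (n : ℝ) + 1) * (2 * (n : ℝ) + 1)
        ≤ (2 * (n : ℝ) + 1) * (3 * (k : ℝ) + 2) := by nlinarith [hNn, h2]
    nlinarith [h1, hmul, hNn]
  · intro n
    have hb := (total_bounds n).2
    simp only [ncard_box]
    set T := ((Finset.Icc (-(n : ℤ)) n ×ˢ Finset.Icc (-(n : ℤ)) n).filter
        (fun p => (p.1 + p.2) % 3 = 0)).card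
    set k : ℕ := (2 * n + 1) / 3 with hk
    have h1 : (T : ℝ) ≤ ((2 * n + 1 : ℕ) : ℝ) * (k + 1) := by exact_mod_cast hb
    have h2 : 3 * (k : ℝ) ≤ 2 * (n : ℝ) + 1 := by
      have : 3 * k ≤ 2 * n + 1 := by omega
      exact_mod_cast this
    have hNn := hN n
    rw [div_le_iff₀ (by positivity)]
    push_cast at h1
    have e : (1 / 3 + 1 / (2 * (n : ℝ) + 1)) * (2 * (n : ℝ) + 1) ^ 2
        = ((2 * (n : ℝ) + 1) * (2 * (n : ℝ) + 1)) / 3 + (2 * (n : ℝ) + 1) := by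
      field_simp
    rw [e]
    have hmul : (2 * (n : ℝ) + 1) * (3 * (k : ℝ))
        ≤ (2 * (n : ℝ) + 1) * (2 * (n : ℝ) + 1) := by nlinarith [hNn, h2]
    nlinarith [h1, hmul, hNn]

lemma eff3 : IsEff22 A3 S3 := by
  intro w hw
  unfold rec22
  rw [Set.indicator_of_notMem hw, inset_card w hw]

theorem stmt17 :
    ∃ (A : ℤ × ℤ → ℤ × ℤ → Prop) (S : Set (ℤ × ℤ)),
      IsOrientationZ A ∧ HasDensity S (1 / 3) ∧ IsDom22 A S ∧ IsEff22 A S ∧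
      ∀ w ∉ S, Set.ncard {v : ℤ × ℤ | v ∈ S ∧ A v w} = 2 := by
  refine ⟨A3, S3, orient3, density3, ?_, eff3, fun w hw => inset_card w hw⟩
  intro w
  by_cases hw : w ∈ S3
  · unfold rec22
    rw [Set.indicator_of_mem hw]
    exact Nat.le_add_right 2 _
  · exact le_of_eq (eff3 w hw).symm
end
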